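/- Let f : ℝ^p → ℝ be three-times continuously differentiable, convex, (M_f, κ)-generalized self-concordant with κ ∈ (0, 3] and M_f ≥ 0, and μ_f-strongly convex with μ_f > 0 (so ∇²f(x) ⪰ μ_f·I for all x ∈ dom f). Then f is M̂_f-self-concordant with M̂_f := M_f / (√μ_f)^{3−κ}, i.e. |∇³f(x)[u,u,u]| ≤ M̂_f·⟨∇²f(x)u, u⟩^{3/2} for all x ∈ dom f and u ∈ ℝ^p. -/

import Mathlib

open Set
open scoped RealInnerProductSpace

noncomputable section

/-- `ℝ^p` with the Euclidean inner product. -/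
abbrev Euc (p : ℕ) := EuclideanSpace ℝ (Fin p)

/-- The weighted (local) norm `‖u‖_H := √⟪H u, u⟫` induced by an operator `H`. -/
noncomputable def wnorm {p : ℕ} (H : Euc p →L[ℝ] Euc p) (u : Euc p) : ℝ :=
  Real.sqrt ⟪H u, u⟫

/-- `v` is a subgradient at `y` of the proper convex function equal to `g` on its
effective domain `S` (and `+∞` outside). -/
def IsSubgradient {p : ℕ} (g : Euc p → ℝ) (S : Set (Euc p)) (v y : Euc p) : Prop :=
  y ∈ S ∧ ∀ z ∈ S, g y + ⟪v, z - y⟫ ≤ g z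

/-- Closedness of the extended-real-valued function equal to `g` on `S` and `+∞`
outside, expressed as closedness of its epigraph. -/
def ClosedOn {p : ℕ} (g : Euc p → ℝ) (S : Set (Euc p)) : Prop :=
  IsClosed {q : Euc p × ℝ | q.1 ∈ S ∧ g q.1 ≤ q.2}

/-- Proposition: a generalized self-concordant and strongly convex
function is self-concordant with constant `M_f/(√μ_f)^{3-κ}`. -/
theorem stmt_19 {p : ℕ}
    (f : Euc p → ℝ)
    (f' : Euc p → Euc p)
    (f'' : Euc p → Euc p →L[ℝ] Euc p)
    (f''' : Euc p → Euc p →L[ℝ] Euc p →L[ℝ] Euc p)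
    (Mf κ μf : ℝ)
    -- `f` is three times continuously differentiable and convex
    (hf_smooth : ContDiff ℝ 3 f)
    (hf_convex : ConvexOn ℝ univ f)
    (hf_grad : ∀ x, HasGradientAt f (f' x) x)
    (hf_hess : ∀ x, HasFDerivAt f' (f'' x) x)
    (hf_third : ∀ x, HasFDerivAt f'' (f''' x) x)
    -- `f` is `(Mf, κ)`-generalized self-concordant with `κ ∈ (0,3]`, `Mf ≥ 0`
    (hMf : 0 ≤ Mf)
    (hκ : κ ∈ Ioc (0 : ℝ) 3)
    (hgsc : ∀ x u v : Euc p,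
      |⟪f''' x u v, v⟫| ≤
        Mf * ⟪f'' x v, v⟫ * Real.sqrt ⟪f'' x u, u⟫ ^ (κ - 2) * ‖u‖ ^ ((3 : ℝ) - κ))
    -- `f` is `μf`-strongly convex, so that `∇²f(x) ⪰ μf·I`
    (hμf : 0 < μf)
    (hf_strong : StrongConvexOn univ μf f)
    (hf_hess_lb : ∀ x, ∀ u : Euc p, μf * ‖u‖ ^ 2 ≤ ⟪f'' x u, u⟫) :
    -- `f` is `M̂f`-self-concordant with `M̂f = Mf/(√μf)^{3-κ}`
    ∀ x u : Euc p,
      |⟪f''' x u u, u⟫| ≤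
        (Mf / Real.sqrt μf ^ ((3 : ℝ) - κ)) * ⟪f'' x u, u⟫ ^ ((3 : ℝ) / 2) := by
  intro x u
  rcases eq_or_ne u 0 with rfl | hu
  · simp only [inner_zero_right, abs_zero, map_zero]
    have : ((0:ℝ)) ^ ((3:ℝ)/2) = 0 := Real.zero_rpow (by norm_num)
    rw [this, mul_zero]
  · have hs0 : 0 < ⟪f'' x u, u⟫ := by
      have hn : 0 < ‖u‖ := norm_pos_iff.mpr hu
      have h1 : 0 < μf * ‖u‖ ^ 2 := mul_pos hμf (pow_pos hn 2)
      exact lt_of_lt_of_le h1 (hf_hess_lb x u)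
    set s : ℝ := ⟪f'' x u, u⟫ with hsdef
    set t : ℝ := Real.sqrt s with htdef
    have ht : 0 < t := Real.sqrt_pos.mpr hs0
    have ht2 : t ^ 2 = s := Real.sq_sqrt hs0.le
    have hμs : 0 < Real.sqrt μf := Real.sqrt_pos.mpr hμf
    have hexp : (0:ℝ) ≤ 3 - κ := by linarith [hκ.2]
    have hnorm : ‖u‖ ≤ t / Real.sqrt μf := by
      rw [le_div_iff₀ hμs]
      nlinarith [hf_hess_lb x u, Real.sq_sqrt hμf.le, ht.le,
        mul_nonneg (norm_nonneg u) hμs.le]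
    have hnr : ‖u‖ ^ ((3:ℝ) - κ) ≤ (t / Real.sqrt μf) ^ ((3:ℝ) - κ) :=
      Real.rpow_le_rpow (norm_nonneg u) hnorm hexp
    have key : Mf * s * t ^ (κ - 2) * ‖u‖ ^ ((3:ℝ) - κ) ≤
        Mf * s * t ^ (κ - 2) * (t / Real.sqrt μf) ^ ((3:ℝ) - κ) := by
      have h0 : 0 ≤ Mf * s * t ^ (κ - 2) := by positivity
      exact mul_le_mul_of_nonneg_left hnr h0
    have heq : Mf * s * t ^ (κ - 2) * (t / Real.sqrt μf) ^ ((3:ℝ) - κ) =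
        (Mf / Real.sqrt μf ^ ((3:ℝ) - κ)) * s ^ ((3:ℝ)/2) := by
      rw [Real.div_rpow ht.le hμs.le]
      have h1 : t ^ (κ - 2) * t ^ ((3:ℝ) - κ) = t := by
        rw [← Real.rpow_add ht]
        norm_num
      have h2 : s ^ ((3:ℝ)/2) = s * t := by
        have h3 : s ^ ((3:ℝ)/2) = (s ^ ((1:ℝ)/2)) ^ (3:ℕ) := by
          rw [← Real.rpow_natCast (s ^ ((1:ℝ)/2)) 3, ← Real.rpow_mul hs0.le]
          norm_num
        have h4 : s ^ ((1:ℝ)/2) = t := by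
          rw [htdef, Real.sqrt_eq_rpow]
        rw [h3, h4]
        nlinarith [ht2]
      rw [h2]
      have hμr : 0 < Real.sqrt μf ^ ((3:ℝ) - κ) := Real.rpow_pos_of_pos hμs _
      field_simp
      linear_combination Mf * h1
    calc |⟪f''' x u u, u⟫| ≤ Mf * s * t ^ (κ - 2) * ‖u‖ ^ ((3:ℝ) - κ) := hgsc x u u
      _ ≤ Mf * s * t ^ (κ - 2) * (t / Real.sqrt μf) ^ ((3:ℝ) - κ) := key
      _ = (Mf / Real.sqrt μf ^ ((3:ℝ) - κ)) * s ^ ((3:ℝ)/2) := heq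


end
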